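/- For 0 ≤ k ≤ (n+1)/2, the incomplete q-Chebyshev polynomials satisfy T_{n+2}^k(x,s,q) = x U_{n+1}^k(x,s,q) + q^{n+1} s U_n^{k-1}(x,s,q). -/

import Mathlib

/-- q-integer [n]_q = (1-q^n)/(1-q). -/
noncomputable def qint (q : ℂ) (n : ℕ) : ℂ := (1 - q ^ n) / (1 - q)

/-- q-factorial [n]_q!. -/
noncomputable def qfact (q : ℂ) (n : ℕ) : ℂ := ∏ i ∈ Finset.range n, qint q (i + 1)

/-- Gaussian (q-binomial) coefficient, 0 for k > n. -/
noncomputable def qbinom (q : ℂ) (n k : ℕ) : ℂ :=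
  if k ≤ n then qfact q n / (qfact q (n - k) * qfact q k) else 0

/-- q-shifted factorial (x;q)_n. -/
noncomputable def qpoch (x q : ℂ) (n : ℕ) : ℂ := ∏ i ∈ Finset.range n, (1 - q ^ i * x)

/-- Partial sum defining incomplete q-Chebyshev polynomials of the second kind:
`Usum x s q n (k+1)` is U_n^k(x,s,q), and `Usum x s q n 0 = 0` is the empty sum (k = -1). -/
noncomputable def Usum (x s q : ℂ) (n m : ℕ) : ℂ :=
  ∑ j ∈ Finset.range m,
    q ^ (j ^ 2) * qbinom q (n - j) j * (qpoch (-q) q (n - j) / qpoch (-q) q j) *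
      s ^ j * x ^ (n - 2 * j)

/-- Partial sum defining incomplete q-Chebyshev polynomials of the first kind:
`Tsum x s q n (k+1)` is T_n^k(x,s,q). -/
noncomputable def Tsum (x s q : ℂ) (n m : ℕ) : ℂ :=
  ∑ j ∈ Finset.range m,
    q ^ (j ^ 2) * (qint q n / qint q (n - j)) * qbinom q (n - j) j *
      (qpoch (-q) q (n - j - 1) / qpoch (-q) q j) * s ^ j * x ^ (n - 2 * j)


section
variable {q : ℂ}


lemma pow_ne_one (hq1 : ‖q‖ < 1) {m : ℕ} (hm : 1 ≤ m) : q ^ m ≠ 1 := by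
  intro h
  have h2 : ‖q ^ m‖ < 1 := by
    rw [norm_pow]
    exact pow_lt_one₀ (norm_nonneg q) hq1 (by omega)
  rw [h] at h2; simp at h2

lemma one_sub_q_ne (hq1 : ‖q‖ < 1) : (1 : ℂ) - q ≠ 0 := by
  intro h
  have : q = 1 := by linear_combination -h
  rw [this] at hq1; simp at hq1

lemma qint_ne_zero (hq1 : ‖q‖ < 1) {m : ℕ} (hm : 1 ≤ m) : qint q m ≠ 0 := by
  apply div_ne_zero _ (one_sub_q_ne hq1)
  intro h
  exact pow_ne_one hq1 hm (by linear_combination -h)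

lemma qfact_ne_zero (hq1 : ‖q‖ < 1) (m : ℕ) : qfact q m ≠ 0 :=
  Finset.prod_ne_zero_iff.2 fun i _ => qint_ne_zero hq1 (by omega)

lemma qfact_succ (n : ℕ) : qfact q (n+1) = qfact q n * qint q (n+1) := by
  simp [qfact, Finset.prod_range_succ]

lemma qpoch_succ (x : ℂ) (n : ℕ) : qpoch x q (n+1) = qpoch x q n * (1 - q^n * x) := by
  simp [qpoch, Finset.prod_range_succ]

lemma one_add_pow_ne (hq1 : ‖q‖ < 1) (m : ℕ) : (1 : ℂ) + q ^ (m+1) ≠ 0 := by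
  intro h
  have h2 : ‖q ^ (m+1)‖ < 1 :=
    norm_pow q (m+1) ▸ pow_lt_one₀ (norm_nonneg q) hq1 (by omega)
  have : q ^ (m+1) = -1 := by linear_combination h
  rw [this] at h2; simp at h2

lemma qpoch_neg_ne_zero (hq1 : ‖q‖ < 1) (m : ℕ) : qpoch (-q) q m ≠ 0 := by
  apply Finset.prod_ne_zero_iff.2
  intro i _
  have := one_add_pow_ne hq1 i
  intro h
  exact this (by rw [pow_succ]; linear_combination h)

lemma qint_split (hq1 : ‖q‖ < 1) (m i : ℕ) :
    qint q (m+2*i+3) = qint q (m+1) + q^(m+1) * (1+q^(i+1)) * qint q (i+1) := by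
  unfold qint
  field_simp
  ring

lemma qbinom_key (hq1 : ‖q‖ < 1) (m i : ℕ) :
    qint q (m+2*i+3) / qint q (i+m+2) * qbinom q (i+m+2) (i+1)
    = qbinom q (i+m+1) (i+1) + q^(m+1) * (1+q^(i+1)) * qbinom q (i+m+1) i := by
  rw [qbinom, if_pos (by omega), qbinom, if_pos (by omega), qbinom, if_pos (by omega)]
  rw [show i+m+2-(i+1) = m+1 by omega, show i+m+1-(i+1) = m by omega,
    show i+m+1-i = m+1 by omega]
  rw [show i+m+2 = (i+m+1)+1 by omega, qfact_succ, qfact_succ (n := m), qfact_succ (n := i)]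
  rw [qint_split hq1 m i]
  have h1 := qfact_ne_zero hq1 (i+m+1)
  have h2 := qfact_ne_zero hq1 m
  have h3 := qfact_ne_zero hq1 i
  have h4 := qint_ne_zero hq1 (m := i+m+2) (by omega)
  have h5 := qint_ne_zero hq1 (m := m+1) (by omega)
  have h6 := qint_ne_zero hq1 (m := i+1) (by omega)
  rw [show i+m+1+1 = i+m+2 by omega]
  field_simp

lemma term_key (hq1 : ‖q‖ < 1) (x s : ℂ) (m i : ℕ) :
    q^((i+1)^2) * (qint q (m+2*i+3) / qint q (i+m+2)) * qbinom q (i+m+2) (i+1) *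
        (qpoch (-q) q (i+m+1) / qpoch (-q) q (i+1)) * s^(i+1) * x^(m+1)
    = x * (q^((i+1)^2) * qbinom q (i+m+1) (i+1) *
        (qpoch (-q) q (i+m+1) / qpoch (-q) q (i+1)) * s^(i+1) * x^m)
      + q^(m+2*i+2) * s * (q^(i^2) * qbinom q (i+m+1) i *
        (qpoch (-q) q (i+m+1) / qpoch (-q) q i) * s^i * x^(m+1)) := by
  have hb := qbinom_key hq1 m i
  have hp : qpoch (-q) q (i+1) = qpoch (-q) q i * (1 + q^(i+1)) := by
    rw [qpoch_succ]; ring_nf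
  have h1 := qpoch_neg_ne_zero hq1 i
  have h2 := one_add_pow_ne hq1 i
  rw [hp, mul_assoc (q^((i+1)^2)), hb]
  field_simp
  ring

lemma qbinom_zero (hq1 : ‖q‖ < 1) (N : ℕ) : qbinom q N 0 = 1 := by
  rw [qbinom, if_pos (Nat.zero_le N)]
  have h0 : qfact q 0 = 1 := by simp [qfact]
  rw [Nat.sub_zero, h0, mul_one, div_self (qfact_ne_zero hq1 N)]

lemma qpoch_zero (x : ℂ) : qpoch x q 0 = 1 := by simp [qpoch]


end

theorem Tinc_eq_Uinc (q : ℂ) (hq0 : 0 < ‖q‖) (hq1 : ‖q‖ < 1)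
    (x s : ℂ) (n k : ℕ) (hk : 2 * k ≤ n + 1) :
    Tsum x s q (n + 2) (k + 1) =
      x * Usum x s q (n + 1) (k + 1) + q ^ (n + 1) * s * Usum x s q n k := by
  have hT : ∀ N j, Tsum x s q N (j+1) = Tsum x s q N j +
      q ^ (j ^ 2) * (qint q N / qint q (N - j)) * qbinom q (N - j) j *
        (qpoch (-q) q (N - j - 1) / qpoch (-q) q j) * s ^ j * x ^ (N - 2 * j) :=
    fun N j => Finset.sum_range_succ _ j
  have hU : ∀ N j, Usum x s q N (j+1) = Usum x s q N j +
      q ^ (j ^ 2) * qbinom q (N - j) j * (qpoch (-q) q (N - j) / qpoch (-q) q j) *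
        s ^ j * x ^ (N - 2 * j) :=
    fun N j => Finset.sum_range_succ _ j
  induction k with
  | zero =>
    have h1 : qint q (n+2) ≠ 0 := qint_ne_zero hq1 (by omega)
    rw [hT, hU]
    simp only [Tsum, Usum, Finset.range_zero, Finset.sum_empty, pow_zero, Nat.sub_zero,
      Nat.mul_zero, mul_one, one_mul, zero_add, mul_zero, add_zero]
    rw [div_self h1, qbinom_zero hq1, qbinom_zero hq1, qpoch_zero, div_one, div_one,
      show n+2-1 = n+1 from rfl, pow_succ]
    ring
  | succ i ih =>
    obtain ⟨m, rfl⟩ : ∃ m, n = m + 2*i + 1 := ⟨n - 2*i - 1, by omega⟩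
    rw [hT _ (i+1), ih (by omega), hU (m+2*i+1+1) (i+1), hU (m+2*i+1) i]
    rw [show m+2*i+1+2 - (i+1) = i+m+2 from by omega,
      show m+2*i+1+2 = m+2*i+3 from by omega,
      show i+m+2-1 = i+m+1 from by omega,
      show m+2*i+3 - 2*(i+1) = m+1 from by omega,
      show m+2*i+1+1 - (i+1) = i+m+1 from by omega,
      show m+2*i+1+1 - 2*(i+1) = m from by omega,
      show m+2*i+1 - i = i+m+1 from by omega,
      show m+2*i+1 - 2*i = m+1 from by omega,
      show m+2*i+1+1 = m+2*i+2 from by omega]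
    linear_combination term_key hq1 x s m i
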